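/- Let A₀ ∈ ℝ^{r×r} be stable, Metzler, and irreducible, let μ₁ < 0 be its real eigenvalue dominating the real parts of all other eigenvalues, and let v₁, w₁ ∈ ℝ^r be entrywise positive vectors with A₀ v₁ = μ₁ v₁, w₁ᵀ A₀ = μ₁ w₁ᵀ, and w₁ᵀ v₁ = 1. Let ε > 0 satisfy μ₁ + ε ≤ 0, set Ā := A₀ − (μ₁ + ε) v₁ w₁ᵀ, and let γ > 0 satisfy −γ I_r ≤ A₀ entrywise. Then the spectral radius of Ā + γ I_r equals γ − ε, i.e., ρ(Ā + γ I_r) = γ − ε. -/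

import Mathlib

open Matrix

/-- A square real matrix is stable if every eigenvalue (as a complex matrix)
has negative real part. -/
def IsStable {r : ℕ} (A : Matrix (Fin r) (Fin r) ℝ) : Prop :=
  ∀ μ ∈ spectrum ℂ (A.map Complex.ofReal), μ.re < 0

/-- A square real matrix is Metzler if every off-diagonal entry is nonnegative. -/
def IsMetzler {r : ℕ} (A : Matrix (Fin r) (Fin r) ℝ) : Prop :=
  ∀ i j, i ≠ j → 0 ≤ A i j

/-- A square real matrix is irreducible if the directed graph with an edge
from `i` to `j` whenever `i ≠ j` and `A i j ≠ 0` is strongly connected. -/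
def IsIrreducibleMatrix {r : ℕ} (A : Matrix (Fin r) (Fin r) ℝ) : Prop :=
  ∀ i j : Fin r, Relation.ReflTransGen (fun a b => a ≠ b ∧ A a b ≠ 0) i j

/-- Entrywise order on real matrices. -/
def entryLE {m n : ℕ} (A B : Matrix (Fin m) (Fin n) ℝ) : Prop :=
  ∀ i j, A i j ≤ B i j

/-- The spectral radius of a square real matrix: the maximum modulus of its
complex eigenvalues. -/
noncomputable def specRadius {r : ℕ} (M : Matrix (Fin r) (Fin r) ℝ) : ℝ :=
  sSup ((fun μ : ℂ => ‖μ‖) '' spectrum ℂ (M.map Complex.ofReal))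

lemma aux_vecMulVec_mulVec {r : ℕ} (v w x : Fin r → ℝ) :
    (vecMulVec v w).mulVec x = (w ⬝ᵥ x) • v := by
  funext i
  simp [mulVec, dotProduct, vecMulVec_apply, Finset.mul_sum, mul_assoc, mul_comm, mul_left_comm]

lemma aux_vecMul_smulM {r : ℕ} (c : ℝ) (A : Matrix (Fin r) (Fin r) ℝ) (x : Fin r → ℝ) :
    x ᵥ* (c • A) = c • (x ᵥ* A) := by
  funext j
  simp [vecMul, dotProduct, Finset.mul_sum, mul_left_comm]

lemma aux_vecMul_vecMulVec {r : ℕ} (v w u : Fin r → ℝ) :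
    u ᵥ* (vecMulVec v w) = (u ⬝ᵥ v) • w := by
  funext j
  simp [vecMul, dotProduct, vecMulVec_apply, Finset.sum_mul, mul_assoc]

/-- An eigenvalue of a real matrix, viewed over ℂ, yields a nonzero complex
eigenvector. -/
lemma aux_spectrum_iff {r : ℕ} (M : Matrix (Fin r) (Fin r) ℝ) (μ : ℂ) :
    μ ∈ spectrum ℂ (M.map Complex.ofReal) ↔
      ∃ x : Fin r → ℂ, x ≠ 0 ∧ (M.map Complex.ofReal) *ᵥ x = μ • x := by
  rw [spectrum.mem_iff, Matrix.isUnit_iff_isUnit_det, isUnit_iff_ne_zero, not_not,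
    ← Matrix.exists_mulVec_eq_zero_iff]
  constructor
  · rintro ⟨x, hx, h⟩
    refine ⟨x, hx, ?_⟩
    rw [sub_mulVec, Algebra.algebraMap_eq_smul_one, smul_mulVec, one_mulVec,
      sub_eq_zero] at h
    exact h.symm
  · rintro ⟨x, hx, h⟩
    refine ⟨x, hx, ?_⟩
    rw [sub_mulVec, Algebra.algebraMap_eq_smul_one, smul_mulVec, one_mulVec,
      sub_eq_zero, h]

lemma aux_eig_bound {r : ℕ} (M : Matrix (Fin r) (Fin r) ℝ)
    (hM : ∀ i j, 0 ≤ M i j) (w : Fin r → ℝ) (hw : ∀ i, 0 < w i) (ρ : ℝ)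
    (hwM : w ᵥ* M = ρ • w) (μ : ℂ) (hμ : μ ∈ spectrum ℂ (M.map Complex.ofReal)) :
    ‖μ‖ ≤ ρ := by
  obtain ⟨x, hx, hMx⟩ := (aux_spectrum_iff M μ).mp hμ
  set y : Fin r → ℝ := fun i => ‖x i‖ with hy
  have hy0 : ∀ i, 0 ≤ y i := fun i => norm_nonneg _
  have hrow : ∀ i, ‖μ‖ * y i ≤ ∑ j, M i j * y j := by
    intro i
    have h1 : (M.map Complex.ofReal *ᵥ x) i = μ * x i := by rw [hMx]; rfl
    have h2 : ‖(M.map Complex.ofReal *ᵥ x) i‖ ≤ ∑ j, M i j * y j := by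
      have he : (M.map Complex.ofReal *ᵥ x) i = ∑ j, (M i j : ℂ) * x j := by
        simp [mulVec, dotProduct]
      rw [he]
      refine le_trans (norm_sum_le _ _) (Finset.sum_le_sum fun j _ => ?_)
      rw [norm_mul, Complex.norm_real, Real.norm_eq_abs, abs_of_nonneg (hM i j)]
    rw [h1, norm_mul] at h2
    exact h2
  have hvecMul : ∀ j, ∑ i, w i * M i j = ρ * w j := by
    intro j
    have := congrFun hwM j
    simpa [vecMul, dotProduct] using this
  have hsum : ‖μ‖ * (∑ i, w i * y i) ≤ ρ * (∑ i, w i * y i) := by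
    have step : ∑ i, w i * (‖μ‖ * y i) ≤ ∑ i, w i * (∑ j, M i j * y j) :=
      Finset.sum_le_sum fun i _ => mul_le_mul_of_nonneg_left (hrow i) (hw i).le
    have lhs : ∑ i, w i * (‖μ‖ * y i) = ‖μ‖ * ∑ i, w i * y i := by
      rw [Finset.mul_sum]; congr 1; funext i; ring
    have hswap : ∑ i, w i * (∑ j, M i j * y j) = ∑ j, (∑ i, w i * M i j) * y j := by
      simp_rw [Finset.mul_sum, Finset.sum_mul, mul_assoc]
      exact Finset.sum_comm
    have rhs : ∑ i, w i * (∑ j, M i j * y j) = ρ * ∑ i, w i * y i := by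
      rw [hswap, Finset.mul_sum]
      congr 1; funext j
      rw [hvecMul j]; ring
    rw [lhs, rhs] at step
    exact step
  have hSpos : 0 < ∑ i, w i * y i := by
    obtain ⟨i, hi⟩ := Function.ne_iff.mp hx
    refine Finset.sum_pos' (fun i _ => mul_nonneg (hw i).le (hy0 i))
      ⟨i, Finset.mem_univ i, mul_pos (hw i) ?_⟩
    exact norm_pos_iff.mpr hi
  exact le_of_mul_le_mul_right hsum hSpos

/-- with `Ā := A₀ − (μ₁ + ε) v₁ w₁ᵀ`, the spectral radius of
`Ā + γ I` equals `γ − ε`. -/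
theorem specRadius_shifted_Abar {r : ℕ} (A₀ : Matrix (Fin r) (Fin r) ℝ)
    (hstab : IsStable A₀) (hmet : IsMetzler A₀) (hirr : IsIrreducibleMatrix A₀)
    (μ₁ : ℝ) (hμ₁neg : μ₁ < 0)
    (hμ₁eig : (μ₁ : ℂ) ∈ spectrum ℂ (A₀.map Complex.ofReal))
    (hdom : ∀ μ ∈ spectrum ℂ (A₀.map Complex.ofReal), μ ≠ (μ₁ : ℂ) → μ.re ≤ μ₁)
    (v₁ w₁ : Fin r → ℝ) (hv₁ : ∀ i, 0 < v₁ i) (hw₁ : ∀ i, 0 < w₁ i)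
    (hveig : A₀.mulVec v₁ = μ₁ • v₁) (hweig : Matrix.vecMul w₁ A₀ = μ₁ • w₁)
    (hnorm : w₁ ⬝ᵥ v₁ = 1)
    (ε : ℝ) (hε : 0 < ε) (hμε : μ₁ + ε ≤ 0)
    (γ : ℝ) (hγ : 0 < γ) (hγA₀ : entryLE ((-γ) • (1 : Matrix (Fin r) (Fin r) ℝ)) A₀)
    (Abar : Matrix (Fin r) (Fin r) ℝ)
    (hAbar : Abar = A₀ - (μ₁ + ε) • Matrix.vecMulVec v₁ w₁) :
    specRadius (Abar + γ • (1 : Matrix (Fin r) (Fin r) ℝ)) = γ - ε := by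
  -- dispose of the degenerate case `r = 0`
  rcases Nat.eq_zero_or_pos r with hr | hr
  · subst hr
    rw [spectrum.mem_iff] at hμ₁eig
    exact absurd (isUnit_of_subsingleton _) hμ₁eig
  haveI : Nonempty (Fin r) := ⟨⟨0, hr⟩⟩
  set M : Matrix (Fin r) (Fin r) ℝ := Abar + γ • (1 : Matrix (Fin r) (Fin r) ℝ) with hMdef
  -- right eigenvector
  have hMv : M *ᵥ v₁ = (γ - ε) • v₁ := by
    rw [hMdef, hAbar, add_mulVec, sub_mulVec, smul_mulVec, smul_mulVec,
      one_mulVec, aux_vecMulVec_mulVec, hnorm, hveig]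
    funext i
    simp only [Pi.add_apply, Pi.sub_apply, Pi.smul_apply, smul_eq_mul, one_smul]
    ring
  -- left eigenvector
  have hwM : w₁ ᵥ* M = (γ - ε) • w₁ := by
    rw [hMdef, hAbar, vecMul_add, vecMul_sub, aux_vecMul_smulM, aux_vecMul_smulM, vecMul_one,
      aux_vecMul_vecMulVec, hnorm, hweig]
    funext j
    simp only [Pi.add_apply, Pi.sub_apply, Pi.smul_apply, smul_eq_mul, one_smul]
    ring
  -- entrywise nonnegativity of M
  have hMnn : ∀ i j, 0 ≤ M i j := by
    intro i j
    have hM : M i j = A₀ i j - (μ₁ + ε) * (v₁ i * w₁ j)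
        + γ * (1 : Matrix (Fin r) (Fin r) ℝ) i j := by
      simp [hMdef, hAbar, Matrix.add_apply, Matrix.sub_apply, Matrix.smul_apply,
        vecMulVec_apply, smul_eq_mul]
    have hvw : 0 < v₁ i * w₁ j := mul_pos (hv₁ i) (hw₁ j)
    rcases eq_or_ne i j with rfl | hij
    · have h1 : -γ * (1 : Matrix (Fin r) (Fin r) ℝ) i i ≤ A₀ i i := by
        have := hγA₀ i i
        simpa [Matrix.smul_apply, smul_eq_mul] using this
      rw [Matrix.one_apply_eq] at h1
      rw [hM, Matrix.one_apply_eq]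
      nlinarith [h1]
    · have h1 : 0 ≤ A₀ i j := hmet i j hij
      rw [hM, Matrix.one_apply_ne hij]
      nlinarith
  -- γ - ε ≥ 0
  have hρ0 : 0 ≤ γ - ε := by
    obtain ⟨i⟩ := ‹Nonempty (Fin r)›
    have h1 : (M *ᵥ v₁) i = (γ - ε) * v₁ i := by rw [hMv]; rfl
    have h2 : 0 ≤ (M *ᵥ v₁) i := by
      rw [show (M *ᵥ v₁) i = ∑ j, M i j * v₁ j by simp [mulVec, dotProduct]]
      exact Finset.sum_nonneg fun j _ => mul_nonneg (hMnn i j) (hv₁ j).le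
    rw [h1] at h2
    nlinarith [hv₁ i]
  -- γ - ε is an eigenvalue
  have hmem : ((γ - ε : ℝ) : ℂ) ∈ spectrum ℂ (M.map Complex.ofReal) := by
    rw [aux_spectrum_iff]
    refine ⟨fun i => (v₁ i : ℂ), ?_, ?_⟩
    · intro h
      obtain ⟨i⟩ := ‹Nonempty (Fin r)›
      have := congrFun h i
      simp only [Pi.zero_apply, Complex.ofReal_eq_zero] at this
      exact (hv₁ i).ne' this
    · funext i
      have h1 : (M *ᵥ v₁) i = (γ - ε) * v₁ i := by rw [hMv]; rfl
      have h2 : ∑ j, M i j * v₁ j = (γ - ε) * v₁ i := by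
        rw [← h1]; simp [mulVec, dotProduct]
      simp only [mulVec, dotProduct, Matrix.map_apply, Pi.smul_apply, smul_eq_mul]
      exact_mod_cast h2
  -- conclude
  have hub : ∀ z ∈ (fun μ : ℂ => ‖μ‖) '' spectrum ℂ (M.map Complex.ofReal),
      z ≤ γ - ε := by
    rintro z ⟨μ, hμ, rfl⟩
    exact aux_eig_bound M hMnn w₁ hw₁ (γ - ε) hwM μ hμ
  have hmem' : (γ - ε) ∈ (fun μ : ℂ => ‖μ‖) '' spectrum ℂ (M.map Complex.ofReal) :=
    ⟨((γ - ε : ℝ) : ℂ), hmem, by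
      show ‖((γ - ε : ℝ) : ℂ)‖ = γ - ε
      rw [Complex.norm_real, Real.norm_eq_abs, abs_of_nonneg hρ0]⟩
  exact le_antisymm (csSup_le ⟨γ - ε, hmem'⟩ hub) (le_csSup ⟨γ - ε, hub⟩ hmem')
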